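/- arXiv:2203.09814 — 3 statements merged into one kernel-verified Lean document; each statement's English description precedes it below -/
import Mathlib

section
/- Let q ∈ [1, 2) and let σ be a Borel probability measure on ℝ² whose support is contained in the closed unit disk. Suppose there is a constant A > 0 such that for every smooth compactly supported function φ : ℝ² → ℝ one has ∫ φ dσ ≤ A (‖φ‖_{L^q(ℝ²)} + ‖∇φ‖_{L^q(ℝ²)}). Then there is a constant C, depending only on q and A, such that σ(B(x₀, ε)) ≤ C ε^{2/q − 1} for every x₀ ∈ ℝ² and every ε > 0; that is, σ is d-Frostman with d = 2/q − 1. -/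
/- STATEMENT 0: A probability measure on ℝ² supported in the closed unit disk that is
bounded by the W^{1,q} norm (q ∈ [1,2)) of test functions is d-Frostman with
d = 2/q − 1. -/

open MeasureTheory Metric Filter

noncomputable section

namespace FrostmanAux

/-- The transition profile: equals 1 on `(-∞, 1]`, 0 on `[4, ∞)`. -/
def ψ : ℝ → ℝ := fun t => Real.smoothTransition ((4 - t) / 3)

lemma psi_contDiff : ContDiff ℝ (⊤ : ℕ∞) ψ :=
  Real.smoothTransition.contDiff.comp ((contDiff_const.sub contDiff_id).div_const 3)

lemma psi_one {t : ℝ} (h : t ≤ 1) : ψ t = 1 :=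
  Real.smoothTransition.one_of_one_le (by rw [le_div_iff₀ (by norm_num)]; linarith)

lemma psi_zero {t : ℝ} (h : 4 ≤ t) : ψ t = 0 :=
  Real.smoothTransition.zero_of_nonpos (by rw [div_nonpos_iff]; right; constructor <;> linarith)

lemma psi_nonneg (t : ℝ) : 0 ≤ ψ t := Real.smoothTransition.nonneg _

lemma psi_le_one (t : ℝ) : ψ t ≤ 1 := Real.smoothTransition.le_one _

lemma psi_deriv_zero_of_lt {t : ℝ} (h : t < 1) : deriv ψ t = 0 := by
  have h1 : ψ =ᶠ[nhds t] fun _ => (1 : ℝ) :=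
    Filter.eventually_of_mem (Iio_mem_nhds h) fun s hs => psi_one (le_of_lt hs)
  rw [h1.deriv_eq, deriv_const]

lemma psi_deriv_zero_of_gt {t : ℝ} (h : 4 < t) : deriv ψ t = 0 := by
  have h1 : ψ =ᶠ[nhds t] fun _ => (0 : ℝ) :=
    Filter.eventually_of_mem (Ioi_mem_nhds h) fun s hs => psi_zero (le_of_lt hs)
  rw [h1.deriv_eq, deriv_const]

lemma psi_deriv_bound : ∃ K : ℝ, 0 < K ∧ ∀ t : ℝ, |deriv ψ t| ≤ K := by
  have hcont : Continuous (deriv ψ) :=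
    psi_contDiff.continuous_deriv (by norm_num)
  obtain ⟨C, hC⟩ := (isCompact_Icc (a := (0:ℝ)) (b := 5)).exists_bound_of_continuousOn
    hcont.continuousOn
  refine ⟨max C 1, lt_of_lt_of_le one_pos (le_max_right _ _), fun t => ?_⟩
  by_cases ht : t ∈ Set.Icc (0:ℝ) 5
  · exact le_trans (hC t ht) (le_max_left _ _)
  · rw [Set.mem_Icc, not_and_or] at ht
    rcases ht with ht | ht
    · rw [psi_deriv_zero_of_lt (by linarith [not_le.mp ht])]
      simp only [abs_zero]; exact le_trans zero_le_one (le_max_right C 1)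
    · rw [psi_deriv_zero_of_gt (by linarith [not_le.mp ht])]
      simp only [abs_zero]; exact le_trans zero_le_one (le_max_right C 1)

lemma psi_hasDerivAt (t : ℝ) : HasDerivAt ψ (deriv ψ t) t :=
  ((psi_contDiff.differentiable (by norm_num)) t).hasDerivAt

end FrostmanAux

open FrostmanAux


set_option maxHeartbeats 1000000 in
theorem frostman_of_sobolev_duality
    (q : ℝ) (hq : q ∈ Set.Ico (1 : ℝ) 2)
    (σ : Measure (EuclideanSpace ℝ (Fin 2))) [IsProbabilityMeasure σ]
    (hsupp : σ (Metric.closedBall (0 : EuclideanSpace ℝ (Fin 2)) 1)ᶜ = 0)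
    (A : ℝ) (hA : 0 < A)
    (hdual : ∀ φ : EuclideanSpace ℝ (Fin 2) → ℝ,
      ContDiff ℝ (⊤ : ℕ∞) φ → HasCompactSupport φ →
      ∫ x, φ x ∂σ ≤
        A * ((eLpNorm φ (ENNReal.ofReal q) volume).toReal
          + (eLpNorm (fun x => gradient φ x) (ENNReal.ofReal q) volume).toReal)) :
    ∃ C : ℝ, 0 < C ∧
      ∀ (x₀ : EuclideanSpace ℝ (Fin 2)) (ε : ℝ), 0 < ε →
        σ (Metric.ball x₀ ε) ≤ ENNReal.ofReal (C * ε ^ (2 / q - 1)) := by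
  obtain ⟨hq1, hq2⟩ := hq
  have hq0 : 0 < q := lt_of_lt_of_le one_pos hq1
  have hexp0 : 0 ≤ 2 / q - 1 := by
    rw [sub_nonneg, le_div_iff₀ hq0]; linarith
  obtain ⟨K, hK, hKb⟩ := psi_deriv_bound
  set W : ℝ := (volume (ball (0 : EuclideanSpace ℝ (Fin 2)) 1)).toReal with hW
  have hW0 : 0 ≤ W := ENNReal.toReal_nonneg
  set c1 : ℝ := (4 : ℝ) ^ (1/q) * W ^ (1/q) with hc1
  have hc10 : 0 ≤ c1 := by positivity
  refine ⟨max 1 (A * c1 * (1 + 4*K)), lt_of_lt_of_le one_pos (le_max_left _ _), ?_⟩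
  intro x₀ ε hε
  by_cases hε1 : 1 ≤ ε
  · -- large ε : use that σ is a probability measure
    have h1 : (1:ℝ) ≤ max 1 (A * c1 * (1 + 4*K)) * ε ^ (2 / q - 1) := by
      have := Real.one_le_rpow hε1 hexp0
      nlinarith [le_max_left (1:ℝ) (A * c1 * (1 + 4*K))]
    calc σ (Metric.ball x₀ ε) ≤ σ Set.univ := measure_mono (Set.subset_univ _)
      _ = 1 := measure_univ
      _ = ENNReal.ofReal 1 := by simp
      _ ≤ _ := ENNReal.ofReal_le_ofReal h1
  · push_neg at hε1
    -- the bump function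
    set u : ℝ := (ε^2)⁻¹ with hu
    have hu0 : 0 < u := by positivity
    set φ : EuclideanSpace ℝ (Fin 2) → ℝ := fun x => ψ (‖x - x₀‖^2 * u) with hφ
    have hsm : ContDiff ℝ (⊤ : ℕ∞) φ :=
      psi_contDiff.comp (((contDiff_id.sub contDiff_const).norm_sq ℝ).mul contDiff_const)
    have hout : ∀ x, x ∉ Metric.closedBall x₀ (2*ε) → φ x = 0 := by
      intro x hx
      rw [mem_closedBall, dist_eq_norm, not_le] at hx
      have hn0 : (0:ℝ) ≤ ‖x - x₀‖ := norm_nonneg _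
      apply psi_zero
      have h2 : (2*ε)^2 * u ≤ ‖x - x₀‖^2 * u := by
        have : (2*ε)^2 ≤ ‖x - x₀‖^2 := by nlinarith
        exact mul_le_mul_of_nonneg_right this (le_of_lt hu0)
      have h3 : (2*ε)^2 * u = 4 := by rw [hu]; field_simp; ring
      linarith
    have hcs : HasCompactSupport φ :=
      HasCompactSupport.intro (isCompact_closedBall x₀ (2*ε)) hout
    -- derivative
    have hF : ∀ x, HasFDerivAt φ
        (deriv ψ (‖x - x₀‖^2 * u) •
          (u • ((2:ℝ) • (innerSL ℝ (x - x₀))))) x := by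
      intro x
      have h1 := (HasFDerivAt.norm_sq ((hasFDerivAt_id x).sub_const x₀)).mul_const u
      refine (psi_hasDerivAt _).comp_hasFDerivAt x ?_
      simpa [ContinuousLinearMap.comp_id, two_smul] using h1
    have hgradnorm : ∀ x, ‖gradient φ x‖
        = |deriv ψ (‖x - x₀‖^2 * u)| * (u * (2 * ‖x - x₀‖)) := by
      intro x
      have : gradient φ x = (InnerProductSpace.toDual ℝ _).symm (fderiv ℝ φ x) := rfl
      rw [this, LinearIsometryEquiv.norm_map, (hF x).fderiv,
        norm_smul, norm_smul, norm_smul, innerSL_apply_norm]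
      simp [Real.norm_eq_abs, abs_of_pos hu0]
    -- Lp norm bounds
    set p : ENNReal := ENNReal.ofReal q with hp
    have hp0 : p ≠ 0 := by
      simp only [hp, Ne, ENNReal.ofReal_eq_zero, not_le]; linarith
    have hptop : p ≠ ⊤ := ENNReal.ofReal_ne_top
    have hpt : p.toReal = q := ENNReal.toReal_ofReal (le_of_lt hq0)
    set S := Metric.closedBall x₀ (2*ε) with hS
    set V : ENNReal := volume S with hV
    have hVtop : V ≠ ⊤ := measure_closedBall_lt_top.ne
    have hφle : ∀ x, ‖φ x‖ ≤ ‖Set.indicator S (fun _ => (1:ℝ)) x‖ := by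
      intro x
      by_cases hx : x ∈ S
      · rw [Set.indicator_of_mem hx]
        rw [Real.norm_eq_abs, Real.norm_eq_abs, abs_one, abs_le]
        exact ⟨by linarith [psi_nonneg (‖x - x₀‖^2 * u)], psi_le_one _⟩
      · rw [hout x hx, Set.indicator_of_notMem hx]
    have hL1 : eLpNorm φ p volume ≤ (‖(1:ℝ)‖₊ : ENNReal) * V ^ (1 / p.toReal) :=
      le_trans (eLpNorm_mono hφle)
        (le_of_eq (eLpNorm_indicator_const measurableSet_closedBall hp0 hptop))
    have hgle : ∀ x, ‖gradient φ x‖ ≤ ‖Set.indicator S (fun _ => (4*K/ε : ℝ)) x‖ := by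
      intro x
      rw [hgradnorm]
      by_cases hx : x ∈ S
      · rw [Set.indicator_of_mem hx, Real.norm_eq_abs,
          abs_of_pos (by positivity : (0:ℝ) < 4*K/ε)]
        have hn : ‖x - x₀‖ ≤ 2*ε := by rwa [mem_closedBall, dist_eq_norm] at hx
        have e1 : K * (u * (2 * (2*ε))) = 4*K/ε := by rw [hu]; field_simp; ring
        calc |deriv ψ (‖x - x₀‖^2 * u)| * (u * (2 * ‖x - x₀‖))
            ≤ K * (u * (2 * (2*ε))) := by
              apply mul_le_mul (hKb _) _ (by positivity) hK.le
              gcongr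
          _ = 4*K/ε := e1
      · have hxn : 2*ε < ‖x - x₀‖ := by
          rw [hS, mem_closedBall, dist_eq_norm, not_le] at hx; exact hx
        have h2 : (2*ε)^2 * u < ‖x - x₀‖^2 * u := by
          apply mul_lt_mul_of_pos_right _ hu0
          nlinarith
        have h3 : (2*ε)^2 * u = 4 := by rw [hu]; field_simp; ring
        rw [psi_deriv_zero_of_gt (by linarith), Set.indicator_of_notMem hx]
        simp
    have hL2 : eLpNorm (fun x => gradient φ x) p volume
        ≤ (‖(4*K/ε : ℝ)‖₊ : ENNReal) * V ^ (1 / p.toReal) :=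
      le_trans (eLpNorm_mono hgle)
        (le_of_eq (eLpNorm_indicator_const measurableSet_closedBall hp0 hptop))
    -- compute the volume factor
    have hVtr : V.toReal = 4 * ε^2 * W := by
      rw [hV, hS, Measure.addHaar_closedBall _ _ (by positivity : (0:ℝ) ≤ 2*ε)]
      rw [ENNReal.toReal_mul, ENNReal.toReal_ofReal (by positivity), hW]
      have : Module.finrank ℝ (EuclideanSpace ℝ (Fin 2)) = 2 := by
        simp [finrank_euclideanSpace]
      rw [this]; ring
    have hVrp : V.toReal ^ (1/q) = c1 * ε ^ (2/q) := by
      rw [hVtr, hc1]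
      rw [show (4:ℝ) * ε^2 * W = 4 * ((ε^2) * W) by ring]
      rw [Real.mul_rpow (by norm_num) (mul_nonneg (by positivity) hW0),
        Real.mul_rpow (by positivity) hW0]
      have h5 : ((ε^2 : ℝ)) ^ (1/q) = ε ^ (2/q) := by
        rw [← Real.rpow_natCast ε 2, ← Real.rpow_mul hε.le]
        congr 1
        push_cast
        ring
      rw [h5]; ring
    have hfin : ∀ c : ℝ, ((‖c‖₊ : ENNReal) * V ^ (1 / p.toReal)) ≠ ⊤ := by
      intro c
      exact ENNReal.mul_ne_top ENNReal.coe_ne_top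
        (ENNReal.rpow_ne_top_of_nonneg (by rw [hpt]; positivity) hVtop)
    have htr : ∀ c : ℝ, ((‖c‖₊ : ENNReal) * V ^ (1 / p.toReal)).toReal
        = ‖c‖ * V.toReal ^ (1/q) := by
      intro c
      rw [ENNReal.toReal_mul, ← ENNReal.toReal_rpow, hpt, ENNReal.coe_toReal, coe_nnnorm]
    have hT1 : (eLpNorm φ p volume).toReal ≤ c1 * ε ^ (2/q) := by
      have h := ENNReal.toReal_mono (hfin 1) hL1
      rw [htr 1, hVrp] at h
      simpa using h
    have hT2 : (eLpNorm (fun x => gradient φ x) p volume).toReal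
        ≤ (4*K/ε) * (c1 * ε ^ (2/q)) := by
      have h := ENNReal.toReal_mono (hfin (4*K/ε)) hL2
      rw [htr _, hVrp, Real.norm_eq_abs, abs_of_pos (by positivity : (0:ℝ) < 4*K/ε)] at h
      exact h
    -- lower bound on the integral
    have hone : ∀ x ∈ Metric.ball x₀ ε, φ x = 1 := by
      intro x hx
      rw [mem_ball, dist_eq_norm] at hx
      apply psi_one
      have h1 : ‖x - x₀‖^2 * u ≤ ε^2 * u := by
        apply mul_le_mul_of_nonneg_right _ hu0.le
        exact pow_le_pow_left₀ (norm_nonneg _) hx.le 2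
      have h2 : ε^2 * u = 1 := by rw [hu]; field_simp
      linarith
    have hInt : Integrable φ σ := hsm.continuous.integrable_of_hasCompactSupport hcs
    have hlow : (σ (Metric.ball x₀ ε)).toReal ≤ ∫ x, φ x ∂σ := by
      have heq : ∫ x, Set.indicator (Metric.ball x₀ ε) (fun _ => (1:ℝ)) x ∂σ
          = (σ (Metric.ball x₀ ε)).toReal := by
        rw [integral_indicator_const _ measurableSet_ball]; simp; rfl
      rw [← heq]
      refine integral_mono ((integrable_const (1:ℝ)).indicator measurableSet_ball) hInt ?_
      intro x
      by_cases hx : x ∈ Metric.ball x₀ ε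
      · rw [Set.indicator_of_mem hx, hone x hx]
      · rw [Set.indicator_of_notMem hx]; exact psi_nonneg _
    have hup := hdual φ hsm hcs
    -- combine everything
    have hD : 0 ≤ ε ^ (2/q - 1) := Real.rpow_nonneg hε.le _
    have hεq : ε ^ (2/q) ≤ ε ^ (2/q - 1) :=
      Real.rpow_le_rpow_of_exponent_ge hε hε1.le (by linarith)
    have hdiv : ε ^ (2/q) / ε = ε ^ (2/q - 1) := by
      rw [Real.rpow_sub hε, Real.rpow_one]
    have hmain : (σ (Metric.ball x₀ ε)).toReal ≤ (A * c1 * (1 + 4*K)) * ε ^ (2/q - 1) := by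
      have t2 : (4*K/ε) * (c1 * ε^(2/q)) = 4*K*c1 * (ε^(2/q)/ε) := by ring
      calc (σ (Metric.ball x₀ ε)).toReal ≤ ∫ x, φ x ∂σ := hlow
        _ ≤ A * ((eLpNorm φ p volume).toReal
            + (eLpNorm (fun x => gradient φ x) p volume).toReal) := hup
        _ ≤ A * (c1 * ε^(2/q) + (4*K/ε) * (c1 * ε^(2/q))) := by
            apply mul_le_mul_of_nonneg_left (add_le_add hT1 hT2) hA.le
        _ = A * (c1 * ε^(2/q) + 4*K*c1 * (ε^(2/q)/ε)) := by rw [t2]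
        _ = A * (c1 * ε^(2/q) + 4*K*c1 * ε^(2/q-1)) := by rw [hdiv]
        _ ≤ A * (c1 * ε^(2/q-1) + 4*K*c1 * ε^(2/q-1)) := by
            apply mul_le_mul_of_nonneg_left _ hA.le
            apply add_le_add _ le_rfl
            exact mul_le_mul_of_nonneg_left hεq hc10
        _ = (A * c1 * (1 + 4*K)) * ε^(2/q-1) := by ring
    have hofr : σ (Metric.ball x₀ ε)
        = ENNReal.ofReal ((σ (Metric.ball x₀ ε)).toReal) :=
      (ENNReal.ofReal_toReal (measure_ne_top σ _)).symm
    rw [hofr]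
    apply ENNReal.ofReal_le_ofReal
    calc (σ (Metric.ball x₀ ε)).toReal ≤ (A * c1 * (1 + 4*K)) * ε ^ (2/q - 1) := hmain
      _ ≤ max 1 (A * c1 * (1 + 4*K)) * ε ^ (2/q - 1) :=
          mul_le_mul_of_nonneg_right (le_max_right _ _) hD
end
end

section
/- Let K > 0. Then there exists a constant C > 0 depending only on K such that the following holds: for every r ≥ 1, every E > 0 and every continuously differentiable function f : ℝ² → ℝ satisfying 0 ≤ f(z) ≤ 1 for all z, |∇f(z)| ≤ K √r for all z, and r ∫_{ℝ²} (1 − f) ≤ E, every connected component of the open set {z ∈ ℝ² : f(z) < 1/2} has diameter at most C · E / √r. -/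
/- STATEMENT 5: If 0 ≤ f ≤ 1, |∇f| ≤ K√r and r∫(1−f) ≤ E, then every connected
component of {f < 1/2} has diameter at most C·E/√r, with C depending only on K. -/

open MeasureTheory Metric Filter

noncomputable section

theorem diam_of_sublevel_component (K : ℝ) (hK : 0 < K) :
    ∃ C : ℝ, 0 < C ∧
    ∀ (r E : ℝ), 1 ≤ r → 0 < E →
    ∀ f : EuclideanSpace ℝ (Fin 2) → ℝ, ContDiff ℝ 1 f →
    (∀ z, 0 ≤ f z ∧ f z ≤ 1) →
    (∀ z, ‖gradient f z‖ ≤ K * Real.sqrt r) →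
    ENNReal.ofReal r * (∫⁻ z, ENNReal.ofReal (1 - f z)) ≤ ENNReal.ofReal E →
    ∀ z₀ : EuclideanSpace ℝ (Fin 2), f z₀ < 1 / 2 →
      EMetric.diam (connectedComponentIn {z : EuclideanSpace ℝ (Fin 2) | f z < 1 / 2} z₀)
        ≤ ENNReal.ofReal (C * E / Real.sqrt r) := by
  classical
  set E2 := EuclideanSpace ℝ (Fin 2)
  set V : ENNReal := volume (Metric.ball (0 : E2) 1) with hVdef
  have hVpos : 0 < V := measure_ball_pos _ _ one_pos
  have hVlt : V ≠ ⊤ := measure_ball_lt_top.ne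
  set v : ℝ := V.toReal with hvdef
  have hvpos : 0 < v := ENNReal.toReal_pos hVpos.ne' hVlt
  refine ⟨32 * K / v, by positivity, ?_⟩
  intro r E hr hE f hf hbounds hgrad hint z₀ hz₀
  set s : ℝ := Real.sqrt r with hsdef
  have hs1 : 1 ≤ s := by
    rw [hsdef, show (1 : ℝ) = Real.sqrt 1 by simp]
    exact Real.sqrt_le_sqrt hr
  have hspos : 0 < s := lt_of_lt_of_le one_pos hs1
  have hss : s * s = r := Real.mul_self_sqrt (by linarith)
  have hrpos : (0 : ℝ) < r := by linarith
  have hKs : 0 < K * s := mul_pos hK hspos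
  set ρ : ℝ := 1 / (4 * (K * s)) with hρdef
  have hρpos : 0 < ρ := by positivity
  -- Lipschitz bound from gradient bound
  have hlip : ∀ w z : E2, |f w - f z| ≤ K * s * dist w z := by
    intro w z
    have hdiff : ∀ x ∈ (Set.univ : Set E2), DifferentiableAt ℝ f x := fun x _ =>
      (hf.differentiable one_ne_zero).differentiableAt
    have hbd : ∀ x ∈ (Set.univ : Set E2), ‖fderiv ℝ f x‖ ≤ K * s := by
      intro x _
      have : ‖fderiv ℝ f x‖ = ‖gradient f x‖ := by
        rw [gradient]
        exact ((InnerProductSpace.toDual ℝ E2).symm.norm_map (fderiv ℝ f x)).symm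
      rw [this]
      exact hgrad x
    have := Convex.norm_image_sub_le_of_norm_fderiv_le hdiff hbd convex_univ
      (Set.mem_univ z) (Set.mem_univ w)
    rwa [Real.norm_eq_abs, ← dist_eq_norm] at this
  set U : Set E2 := {z : E2 | f z < 1 / 2} with hUdef
  set S : Set E2 := connectedComponentIn U z₀ with hSdef
  have hSU : S ⊆ U := connectedComponentIn_subset U z₀
  have hconn : IsPreconnected S := isPreconnected_connectedComponentIn
  refine EMetric.diam_le fun p hp q hq => ?_
  rw [edist_dist]
  refine ENNReal.ofReal_le_ofReal ?_
  set D : ℝ := dist p q with hDdef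
  have hD0 : 0 ≤ D := dist_nonneg
  -- intermediate value: all distances in [0, D] are attained in S
  have himg : IsPreconnected ((fun z => dist p z) '' S) :=
    hconn.image _ (Continuous.continuousOn (by fun_prop))
  have hIcc : Set.Icc (0 : ℝ) D ⊆ (fun z => dist p z) '' S := by
    apply himg.Icc_subset
    · exact ⟨p, hp, dist_self p⟩
    · exact ⟨q, hq, rfl⟩
  set n : ℕ := ⌊D / (2 * ρ)⌋₊ with hndef
  have hchoice : ∀ k : ℕ, k ≤ n → ∃ w : E2, w ∈ S ∧ dist p w = 2 * ρ * k := by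
    intro k hk
    have hk1 : 2 * ρ * (k : ℝ) ∈ Set.Icc (0 : ℝ) D := by
      constructor
      · positivity
      · have h1 : (k : ℝ) ≤ n := by exact_mod_cast hk
        have h2 : (n : ℝ) ≤ D / (2 * ρ) := Nat.floor_le (by positivity)
        have h3 : (k : ℝ) ≤ D / (2 * ρ) := le_trans h1 h2
        calc 2 * ρ * (k : ℝ) ≤ 2 * ρ * (D / (2 * ρ)) := by
              apply mul_le_mul_of_nonneg_left h3 (by positivity)
          _ = D := by field_simp
    obtain ⟨w, hwS, hwd⟩ := hIcc hk1
    exact ⟨w, hwS, hwd⟩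
  set z : ℕ → E2 := fun k => if hk : k ≤ n then (hchoice k hk).choose else z₀ with hzdef
  have hzS : ∀ k, k ≤ n → z k ∈ S := by
    intro k hk; rw [hzdef]; simp only [dif_pos hk]; exact (hchoice k hk).choose_spec.1
  have hzd : ∀ k, k ≤ n → dist p (z k) = 2 * ρ * k := by
    intro k hk; rw [hzdef]; simp only [dif_pos hk]; exact (hchoice k hk).choose_spec.2
  -- disjointness of the balls of radius ρ
  have hdisj : (↑(Finset.range (n + 1)) : Set ℕ).PairwiseDisjoint
      (fun k => Metric.ball (z k) ρ) := by
    intro j hj k hk hjk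
    simp only [Finset.coe_range, Set.mem_Iio] at hj hk
    have hj' : j ≤ n := Nat.lt_succ_iff.mp hj
    have hk' : k ≤ n := Nat.lt_succ_iff.mp hk
    apply ball_disjoint_ball
    have h1 : |dist (z j) p - dist (z k) p| ≤ dist (z j) (z k) := abs_dist_sub_le _ _ _
    rw [dist_comm (z j) p, dist_comm (z k) p, hzd j hj', hzd k hk'] at h1
    have h2 : 2 * ρ * (j : ℝ) - 2 * ρ * (k : ℝ) = 2 * ρ * ((j : ℝ) - k) := by ring
    have h3 : (1 : ℝ) ≤ |(j : ℝ) - (k : ℝ)| := by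
      have : ((j : ℤ)) ≠ (k : ℤ) := by exact_mod_cast hjk
      have := Int.one_le_abs (sub_ne_zero.mpr this)
      exact_mod_cast this
    have h4 : 2 * ρ ≤ |2 * ρ * ((j : ℝ) - k)| := by
      rw [abs_mul, abs_of_pos (by positivity : (0:ℝ) < 2 * ρ)]
      nlinarith
    rw [h2] at h1
    linarith
  -- lower bound for the integrand on each ball
  have hball : ∀ k, k ≤ n → ∀ w ∈ Metric.ball (z k) ρ,
      ENNReal.ofReal (1 / 4) ≤ ENNReal.ofReal (1 - f w) := by
    intro k hk w hw
    apply ENNReal.ofReal_le_ofReal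
    have h1 : f (z k) < 1 / 2 := hSU (hzS k hk)
    have h2 : |f w - f (z k)| ≤ K * s * dist w (z k) := hlip w (z k)
    have h3 : dist w (z k) ≤ ρ := (mem_ball.mp hw).le
    have h4 : K * s * dist w (z k) ≤ K * s * ρ :=
      mul_le_mul_of_nonneg_left h3 (le_of_lt hKs)
    have h5 : K * s * ρ = 1 / 4 := by rw [hρdef]; field_simp
    have h6 : f w - f (z k) ≤ 1 / 4 := le_trans (le_abs_self _) (by linarith)
    linarith
  -- volume of the union of the balls
  set T : Set E2 := ⋃ k ∈ Finset.range (n + 1), Metric.ball (z k) ρ with hTdef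
  have hvolT : volume T = (↑(n + 1) : ENNReal) * (ENNReal.ofReal (ρ ^ 2) * V) := by
    rw [hTdef, measure_biUnion_finset hdisj (fun k _ => measurableSet_ball)]
    have heach : ∀ k ∈ Finset.range (n + 1),
        volume (Metric.ball (z k) ρ) = ENNReal.ofReal (ρ ^ 2) * V := by
      intro k _
      rw [Measure.addHaar_ball volume (z k) hρpos.le]
      have hfr : Module.finrank ℝ E2 = 2 := finrank_euclideanSpace_fin
      rw [hfr]
    rw [Finset.sum_congr rfl heach, Finset.sum_const, Finset.card_range, nsmul_eq_mul]
  -- lower bound for the integral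
  have hlow : ENNReal.ofReal (1 / 4) * volume T ≤ ∫⁻ w, ENNReal.ofReal (1 - f w) := by
    have hmg : Measurable fun w : E2 => ENNReal.ofReal (1 - f w) :=
      ENNReal.measurable_ofReal.comp (measurable_const.sub (hf.continuous.measurable))
    calc ENNReal.ofReal (1 / 4) * volume T
        = ∫⁻ _ in T, ENNReal.ofReal (1 / 4) := (setLIntegral_const T _).symm
      _ ≤ ∫⁻ w in T, ENNReal.ofReal (1 - f w) := by
          apply setLIntegral_mono hmg
          intro w hw
          rw [hTdef] at hw
          simp only [Set.mem_iUnion, Finset.mem_range] at hw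
          obtain ⟨k, hk, hwk⟩ := hw
          exact hball k (Nat.lt_succ_iff.mp hk) w hwk
      _ ≤ ∫⁻ w, ENNReal.ofReal (1 - f w) := setLIntegral_le_lintegral T _
  -- combine with the mass hypothesis
  have hI : ENNReal.ofReal r * (ENNReal.ofReal (1 / 4) * volume T) ≤ ENNReal.ofReal E :=
    le_trans (mul_le_mul_right hlow _) hint
  rw [hvolT] at hI
  have hVv : V = ENNReal.ofReal v := (ENNReal.ofReal_toReal hVlt).symm
  have hnat : (↑(n + 1) : ENNReal) = ENNReal.ofReal ((n : ℝ) + 1) := by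
    rw [show ((n : ℝ) + 1) = ((n + 1 : ℕ) : ℝ) by push_cast; ring, ENNReal.ofReal_natCast]
  rw [hVv, hnat] at hI
  have e1 : ENNReal.ofReal (ρ ^ 2) * ENNReal.ofReal v = ENNReal.ofReal (ρ ^ 2 * v) :=
    (ENNReal.ofReal_mul (by positivity)).symm
  have e2 : ENNReal.ofReal ((n : ℝ) + 1) * ENNReal.ofReal (ρ ^ 2 * v)
      = ENNReal.ofReal (((n : ℝ) + 1) * (ρ ^ 2 * v)) :=
    (ENNReal.ofReal_mul (by positivity)).symm
  have e3 : ENNReal.ofReal (1 / 4) * ENNReal.ofReal (((n : ℝ) + 1) * (ρ ^ 2 * v))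
      = ENNReal.ofReal (1 / 4 * (((n : ℝ) + 1) * (ρ ^ 2 * v))) :=
    (ENNReal.ofReal_mul (by positivity)).symm
  have e4 : ENNReal.ofReal r * ENNReal.ofReal (1 / 4 * (((n : ℝ) + 1) * (ρ ^ 2 * v)))
      = ENNReal.ofReal (r * (1 / 4 * (((n : ℝ) + 1) * (ρ ^ 2 * v)))) :=
    (ENNReal.ofReal_mul (by positivity)).symm
  rw [e1, e2, e3, e4] at hI
  have hA : r * (1 / 4 * (((n : ℝ) + 1) * (ρ ^ 2 * v))) ≤ E :=
    (ENNReal.ofReal_le_ofReal_iff hE.le).mp hI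
  -- D < 2ρ(n+1)
  have hDn : D < 2 * ρ * ((n : ℝ) + 1) := by
    have h1 : D / (2 * ρ) < (n : ℝ) + 1 := Nat.lt_floor_add_one _
    have h2 : D < ((n : ℝ) + 1) * (2 * ρ) := (div_lt_iff₀ (by positivity)).mp h1
    linarith
  -- final arithmetic
  have h8 : D * (r * ρ * v) ≤ 8 * E := by
    have h1 : D * (r * ρ * v) ≤ (2 * ρ * ((n : ℝ) + 1)) * (r * ρ * v) :=
      mul_le_mul_of_nonneg_right hDn.le (by positivity)
    have h2 : (2 * ρ * ((n : ℝ) + 1)) * (r * ρ * v)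
        = 8 * (r * (1 / 4 * (((n : ℝ) + 1) * (ρ ^ 2 * v)))) := by ring
    linarith
  have hrρ : r * ρ = s / (4 * K) := by
    rw [hρdef, ← hss]; field_simp
  rw [hrρ] at h8
  rw [show 32 * K / v * E / s = 32 * K * E / (v * s) by field_simp,
    le_div_iff₀ (by positivity)]
  calc D * (v * s) = 4 * K * (D * (s / (4 * K)) * v) := by field_simp
    _ ≤ 4 * K * (8 * E) := by
        apply mul_le_mul_of_nonneg_left _ (by positivity)
        calc D * (s / (4 * K)) * v = D * (s / (4 * K) * v) := by ring
          _ ≤ 8 * E := h8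
    _ = 32 * (K * E) := by ring
    _ = 32 * K * E := by ring
end
end

section
/- For every C₀ > 0 there is a constant C > 0, depending only on C₀, such that the following holds. Let r ≥ 1, ρ > 0, let Ω ⊂ ℝ³ be open (with coordinates (t, x, y) and e_t := (1,0,0)), let u : Ω → ℝ be C² and let b, H : Ω → ℝ be continuous, and assume that at every point of Ω: u·Δu − |∇u|² + 2 r u² (1 − u − b) = H; 0 ≤ u ≤ 1 + C₀/r; 0 ≤ b ≤ C₀/r; |H| ≤ C₀(1 + √r); |∂_t u| ≤ C₀; |∇ ∂_t u| ≤ C₀ √r; |∇u| ≤ C₀ √r; and the Hessian of u has operator norm at most C₀ r. Let Σ ⊂ Ω be a closed disk of radius ρ contained in an affine plane whose unit normal N satisfies |N − e_t| ≤ C₀ ρ. If q is a local minimum of the restriction of u to Σ lying in the relative interior of Σ, then u(q)² (1 − u(q)) ≤ C (r^{−1/2} + ρ²); consequently, setting η := r^{−1/2} + ρ², either u(q) ≤ C η^{1/2} or 1 − u(q) ≤ C η. -/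
/- STATEMENT 12: Euclidean flow-box maximum principle: at a local minimum of u on a
small disk almost orthogonal to the t-direction, u²(1−u) ≤ C(r^{−1/2} + ρ²); hence u
is either close to 0 or close to 1. -/

open MeasureTheory Metric Filter

noncomputable section

/-- The t-direction in ℝ³ (coordinates (t, x, y)). -/
def eT : EuclideanSpace ℝ (Fin 3) := EuclideanSpace.single 0 1

/-- The standard coordinate directions in ℝ³. -/
def e3 (i : Fin 3) : EuclideanSpace ℝ (Fin 3) := EuclideanSpace.single i 1

/-- The Euclidean Laplacian of a function on ℝ³, as the sum of second partials. -/
def lap3 (u : EuclideanSpace ℝ (Fin 3) → ℝ) (p : EuclideanSpace ℝ (Fin 3)) : ℝ :=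
  ∑ i : Fin 3, fderiv ℝ (fun q => fderiv ℝ u q (e3 i)) p (e3 i)

/-- The closed disk of radius ρ centered at p₀ inside the affine plane through p₀
with unit normal N. -/
def planarDisk (p₀ N : EuclideanSpace ℝ (Fin 3)) (ρ : ℝ) :
    Set (EuclideanSpace ℝ (Fin 3)) :=
  {p | ‖p - p₀‖ ≤ ρ ∧ inner ℝ (p - p₀) N = (0 : ℝ)}

open Topology Set Finset

abbrev E3' := EuclideanSpace ℝ (Fin 3)

lemma inner_grad (f : E3' → ℝ) (x v : E3') :
    (inner ℝ (gradient f x) v : ℝ) = fderiv ℝ f x v := by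
  rw [gradient, InnerProductSpace.toDual_symm_apply]

lemma second_deriv_test {g : ℝ → ℝ} {m : ℝ} (hmin : IsLocalMin g 0)
    (hg : ∀ᶠ s in 𝓝 (0:ℝ), DifferentiableAt ℝ g s)
    (hm : HasDerivAt (deriv g) m 0) : 0 ≤ m := by
  by_contra hlt
  push_neg at hlt
  have h0 : deriv g 0 = 0 := hmin.deriv_eq_zero
  have hslope : Tendsto (slope (deriv g) 0) (𝓝[≠] 0) (𝓝 m) :=
    hasDerivAt_iff_tendsto_slope.mp hm
  have hev : ∀ᶠ s in 𝓝[≠] (0:ℝ), slope (deriv g) 0 s < m / 2 :=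
    hslope.eventually_lt_const (by linarith)
  rw [eventually_nhdsWithin_iff] at hev
  have hmin' : ∀ᶠ s in 𝓝 (0:ℝ), g 0 ≤ g s := hmin
  have hall := (hev.and hg).and hmin'
  rw [Metric.eventually_nhds_iff] at hall
  obtain ⟨ε, hε, hball⟩ := hall
  have hb : ∀ s : ℝ, |s| < ε →
      ((s ≠ 0 → slope (deriv g) 0 s < m / 2) ∧ DifferentiableAt ℝ g s) ∧ g 0 ≤ g s := by
    intro s hs
    exact hball (by simpa [Real.dist_eq] using hs)
  set t := ε / 2 with ht
  have htpos : 0 < t := by positivity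
  obtain ⟨c, hc, hceq⟩ := exists_hasDerivAt_eq_slope g (deriv g) htpos
    (fun s hs => by
      have : |s| < ε := by
        rcases hs with ⟨h1, h2⟩
        rw [abs_lt]; constructor <;> [linarith; linarith]
      exact ((hb s this).1.2).continuousAt.continuousWithinAt)
    (fun s hs => by
      have : |s| < ε := by
        rcases hs with ⟨h1, h2⟩
        rw [abs_lt]; constructor <;> [linarith; linarith]
      exact ((hb s this).1.2).hasDerivAt)
  rcases hc with ⟨hc0, hct⟩
  have hcabs : |c| < ε := by rw [abs_lt]; constructor <;> linarith
  have hsl : slope (deriv g) 0 c < m / 2 := (hb c hcabs).1.1 (ne_of_gt hc0)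
  rw [slope_def_field, h0] at hsl
  have hgt : 0 ≤ (g t - g 0) / (t - 0) := by
    have := (hb t (by rw [abs_of_pos htpos]; linarith)).2
    apply div_nonneg <;> linarith
  rw [← hceq] at hgt
  have : deriv g c < m / 2 * c := by
    rw [sub_zero, sub_zero] at hsl
    exact (div_lt_iff₀ hc0).mp hsl
  nlinarith

lemma hasDerivAt_line (u : E3' → ℝ) (q v : E3') (s : ℝ)
    (hu : DifferentiableAt ℝ u (q + s • v)) :
    HasDerivAt (fun t : ℝ => u (q + t • v)) (fderiv ℝ u (q + s • v) v) s := by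
  have hline : HasDerivAt (fun t : ℝ => q + t • v) v s := by
    simpa using ((hasDerivAt_id s).smul_const v).const_add q
  exact hu.hasFDerivAt.comp_hasDerivAt s hline

lemma hasDerivAt_dline (u : E3' → ℝ) (q v : E3')
    (hu : DifferentiableAt ℝ (fderiv ℝ u) q) :
    HasDerivAt (fun t : ℝ => fderiv ℝ u (q + t • v) v)
      (fderiv ℝ (fderiv ℝ u) q v v) 0 := by
  have hline : HasDerivAt (fun t : ℝ => q + t • v) v (0:ℝ) := by
    simpa using ((hasDerivAt_id (0:ℝ)).smul_const v).const_add q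
  have hw : HasFDerivAt (fun p => fderiv ℝ u p v)
      ((fderiv ℝ (fderiv ℝ u) q).flip v) q := by
    have := hu.hasFDerivAt.clm_apply (hasFDerivAt_const v q)
    simpa using this
  rw [show q = q + (0:ℝ) • v by simp] at hw
  have := hw.comp_hasDerivAt (0:ℝ) hline
  simp at this; exact this

lemma trace_indep (B : E3' →L[ℝ] E3' →L[ℝ] ℝ) (b : OrthonormalBasis (Fin 3) ℝ E3') :
    ∑ i, B (EuclideanSpace.single i (1:ℝ)) (EuclideanSpace.single i 1)
      = ∑ j, B (b j) (b j) := by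
  have hexp : ∀ x : E3', B x x
      = ∑ j, ∑ k, (inner ℝ (b j) x : ℝ) * ((inner ℝ (b k) x : ℝ) * B (b j) (b k)) := by
    intro x
    conv_lhs => rw [← b.sum_repr' x]
    simp only [map_sum, _root_.map_smul, ContinuousLinearMap.coe_sum', Finset.sum_apply,
      ContinuousLinearMap.coe_smul', Pi.smul_apply, smul_eq_mul]
    simp only [Finset.mul_sum]
    rw [Finset.sum_comm]
    exact Finset.sum_congr rfl fun j _ => Finset.sum_congr rfl fun k _ => by ring
  have hsingle : ∀ (y : E3') (i : Fin 3),
      (inner ℝ y (EuclideanSpace.single i (1:ℝ)) : ℝ) = y i := by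
    intro y i
    simp [EuclideanSpace.inner_single_right]
  have hbb : ∀ j k, ∑ i : Fin 3, (b j) i * (b k) i = (if j = k then (1:ℝ) else 0) := by
    intro j k
    have h1 : (inner ℝ (b j) (b k) : ℝ) = ∑ i, (b j) i * (b k) i := by
      simp [PiLp.inner_apply, RCLike.inner_apply, mul_comm]
    rw [← h1, orthonormal_iff_ite.mp b.orthonormal]
  calc ∑ i, B (EuclideanSpace.single i (1:ℝ)) (EuclideanSpace.single i 1)
      = ∑ i, ∑ j, ∑ k, (b j) i * ((b k) i * B (b j) (b k)) := by
        refine Finset.sum_congr rfl fun i _ => ?_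
        rw [hexp]
        simp only [hsingle]
    _ = ∑ j, ∑ k, (∑ i, (b j) i * (b k) i) * B (b j) (b k) := by
        rw [Finset.sum_comm]
        refine Finset.sum_congr rfl fun j _ => ?_
        rw [Finset.sum_comm]
        refine Finset.sum_congr rfl fun k _ => ?_
        rw [Finset.sum_mul]
        exact Finset.sum_congr rfl fun i _ => by ring
    _ = ∑ j, B (b j) (b j) := by
        refine Finset.sum_congr rfl fun j _ => ?_
        simp only [hbb]
        simp

lemma exists_onb (N : E3') (hN : ‖N‖ = 1) :
    ∃ b : OrthonormalBasis (Fin 3) ℝ E3', b 0 = N := by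
  have hcard : Module.finrank ℝ E3' = Fintype.card (Fin 3) := by simp
  have horth : Orthonormal ℝ (Set.restrict {0} (fun _ : Fin 3 => N)) := by
    constructor
    · intro i; exact hN
    · intro i j hij
      exact absurd (Subtype.ext ((i.2 : (i:Fin 3) ∈ ({0}:Set (Fin 3))).trans
        (j.2 : (j:Fin 3) ∈ ({0}:Set (Fin 3))).symm)) hij
  obtain ⟨b, hb⟩ := horth.exists_orthonormalBasis_extension_of_card_eq hcard
  exact ⟨b, hb 0 rfl⟩

lemma aux_sq_add (a b : ℝ) : (a+b)^2 ≤ 2*a^2 + 2*b^2 := by nlinarith [sq_nonneg (a-b)]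

lemma aux_coeff (C₀ : ℝ) (h : 0 < C₀) :
    C₀ ≤ (1+C₀)^4 ∧ C₀^2 ≤ (1+C₀)^4 ∧ C₀^4 ≤ (1+C₀)^4 ∧ (1+C₀)*C₀ ≤ (1+C₀)^4 ∧
    (1+C₀)*C₀^2 ≤ (1+C₀)^4 ∧ (1+C₀)*C₀^3 ≤ (1+C₀)^4 ∧ (1+C₀)^2*C₀ ≤ (1+C₀)^4 := by
  refine ⟨?_,?_,?_,?_,?_,?_,?_⟩ <;>
    linarith [pow_nonneg h.le 2, pow_nonneg h.le 3, pow_nonneg h.le 4, h.le]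

set_option maxHeartbeats 1000000 in
lemma main_numeric (C₀ s ρ U L G Hq bq : ℝ) (hC₀ : 0 < C₀) (hs1 : 1 ≤ s) (hρ : 0 < ρ)
    (hU0 : 0 ≤ U) (hU1 : U ≤ 1 + C₀ / (s*s)) (hb0 : 0 ≤ bq) (hb1 : bq ≤ C₀ / (s*s))
    (hG0 : 0 ≤ G) (hG : G ≤ C₀ + C₀^2 * ρ * s) (hHb : |Hq| ≤ C₀ * (1 + s))
    (hL : -(C₀*s + 2*C₀^2*ρ*s + C₀^3*ρ^2*(s*s)) ≤ L)
    (heq : U * L - G ^ 2 + 2 * (s*s) * U ^ 2 * (1 - U - bq) = Hq) :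
    U^2 * (1 - U) ≤ (5 * (1 + C₀)^4) * (s⁻¹ + ρ^2) := by
  have hs0 : 0 < s := by linarith
  have hss : (0:ℝ) < s * s := by positivity
  have hss1 : (1:ℝ) ≤ s * s := by nlinarith
  have hdivC : C₀ / (s*s) ≤ C₀ := by
    rw [div_le_iff₀ hss]
    nlinarith [mul_nonneg hC₀.le (by linarith : (0:ℝ) ≤ s*s - 1)]
  have hU1' : U ≤ 1 + C₀ := by linarith
  have hbq' : (s*s) * bq ≤ C₀ := by
    have := (le_div_iff₀ hss).mp hb1
    linarith
  obtain ⟨c1, c2, c3, c4, c5, c6, c7⟩ := aux_coeff C₀ hC₀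
  set D := (1+C₀)^4 with hD
  have hD0 : 0 < D := by positivity
  set K := C₀*s + 2*C₀^2*ρ*s + C₀^3*ρ^2*(s*s) with hK
  have hK0 : 0 ≤ K := by positivity
  have h1 : Hq ≤ C₀ * (1 + s) := (abs_le.mp hHb).2
  have h2 : G^2 ≤ 2*C₀^2 + 2*C₀^4*(ρ^2*(s*s)) := by
    have ha : G^2 ≤ (C₀ + C₀^2*ρ*s)^2 := by
      have := pow_le_pow_left₀ hG0 hG 2
      linarith
    have hb' := aux_sq_add C₀ (C₀^2*ρ*s)
    have hc' : (C₀^2*ρ*s)^2 = C₀^4*(ρ^2*(s*s)) := by ring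
    linarith
  have h3 : -(U*L) ≤ (1+C₀) * K := by
    have ha : U * -K ≤ U * L := mul_le_mul_of_nonneg_left hL hU0
    have hbu : U * K ≤ (1+C₀) * K := mul_le_mul_of_nonneg_right hU1' hK0
    linarith
  have h4 : (s*s) * (U^2 * bq) ≤ (1+C₀)^2 * C₀ := by
    have hU2 : U^2 ≤ (1+C₀)^2 := by
      have := pow_le_pow_left₀ hU0 hU1' 2
      linarith
    have e := mul_le_mul_of_nonneg_right hU2 (mul_nonneg hss.le hb0)
    have f := mul_le_mul_of_nonneg_left hbq' (by positivity : (0:ℝ) ≤ (1+C₀)^2)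
    linarith [e, f]
  have heq' : 2*(s*s)*(U^2*(1-U)) = Hq + G^2 - U*L + 2*((s*s)*(U^2*bq)) := by
    linear_combination heq
  have h5 : 2*(s*s)*(U^2*(1-U)) ≤ C₀*(1+s) + (2*C₀^2 + 2*C₀^4*(ρ^2*(s*s)))
      + (1+C₀)*K + 2*((1+C₀)^2*C₀) := by linarith
  have hQ : 2*(ρ*s) ≤ ρ^2*(s*s) + 1 := by nlinarith [sq_nonneg (ρ*s - 1)]
  have h6 : C₀*(1+s) + (2*C₀^2 + 2*C₀^4*(ρ^2*(s*s))) + (1+C₀)*K + 2*((1+C₀)^2*C₀)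
      ≤ 10*D*s + 10*D*(ρ^2*(s*s)) := by
    have hP0 : (0:ℝ) ≤ ρ^2*(s*s) := by positivity
    have e1 : C₀*s ≤ D*s := mul_le_mul_of_nonneg_right c1 hs0.le
    have e2 : C₀^4*(ρ^2*(s*s)) ≤ D*(ρ^2*(s*s)) := mul_le_mul_of_nonneg_right c3 hP0
    have e3 : ((1+C₀)*C₀)*s ≤ D*s := mul_le_mul_of_nonneg_right c4 hs0.le
    have e4 : ((1+C₀)*C₀^3)*(ρ^2*(s*s)) ≤ D*(ρ^2*(s*s)) := mul_le_mul_of_nonneg_right c6 hP0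
    have e5 : ((1+C₀)*C₀^2)*(2*(ρ*s)) ≤ D*(ρ^2*(s*s)+1) := by
      have t1 := mul_le_mul_of_nonneg_right c5 (by positivity : (0:ℝ) ≤ 2*(ρ*s))
      have t2 := mul_le_mul_of_nonneg_left hQ hD0.le
      linarith
    have e6 : D ≤ D*s := by nlinarith
    have e7 : C₀ + 2*C₀^2 + 2*((1+C₀)^2*C₀) ≤ 5*D := by linarith
    have hKexp : (1+C₀)*K = ((1+C₀)*C₀)*s + ((1+C₀)*C₀^2)*(2*(ρ*s))
        + ((1+C₀)*C₀^3)*(ρ^2*(s*s)) := by rw [hK]; ring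
    have hDs0 : (0:ℝ) ≤ D*s := by positivity
    have hDP0 : (0:ℝ) ≤ D*(ρ^2*(s*s)) := by positivity
    linarith
  have h7 : (2*(s*s)) * (U^2*(1-U)) ≤ (2*(s*s)) * ((5*D) * (s⁻¹ + ρ^2)) := by
    have hid : (2*(s*s)) * ((5*D) * (s⁻¹ + ρ^2)) = 10*D*s + 10*D*(ρ^2*(s*s)) := by
      field_simp
      ring
    rw [hid]
    linarith
  exact le_of_mul_le_mul_left h7 (by positivity)

lemma final_cases (A s ρ U : ℝ) (hA : 0 < A) (hs : 0 < s) (hρ : 0 < ρ) (hU : 0 ≤ U)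
    (hmain : U^2*(1-U) ≤ A*(s⁻¹+ρ^2)) :
    U^2*(1-U) ≤ (4*A+1)*(s⁻¹+ρ^2) ∧
      (U ≤ (4*A+1)*Real.sqrt (s⁻¹+ρ^2) ∨ 1-U ≤ (4*A+1)*(s⁻¹+ρ^2)) := by
  have hη : 0 < s⁻¹ + ρ^2 := by positivity
  constructor
  · nlinarith
  · rcases lt_or_ge U (1/2) with hc | hc
    · left
      have h2 : U^2 ≤ (2*A)*(s⁻¹+ρ^2) := by nlinarith [sq_nonneg U]
      have h3 : U ≤ Real.sqrt ((2*A)*(s⁻¹+ρ^2)) :=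
        (Real.le_sqrt hU (by positivity)).mpr h2
      have h4 : Real.sqrt ((2*A)*(s⁻¹+ρ^2)) = Real.sqrt (2*A) * Real.sqrt (s⁻¹+ρ^2) :=
        Real.sqrt_mul (by positivity) _
      have h5 : Real.sqrt (2*A) ≤ 4*A+1 := by
        have := Real.sqrt_le_sqrt (show 2*A ≤ (4*A+1)^2 by nlinarith)
        rwa [Real.sqrt_sq (by positivity)] at this
      have h6 := mul_le_mul_of_nonneg_right h5 (Real.sqrt_nonneg (s⁻¹+ρ^2))
      linarith
    · right
      rcases le_or_gt (1-U) 0 with hc2 | hc2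
      · nlinarith
      · nlinarith [mul_nonneg (show (0:ℝ) ≤ U^2 - 1/4 by nlinarith) hc2.le]

set_option maxHeartbeats 1000000 in
theorem maximum_principle_flowBox (C₀ : ℝ) (hC₀ : 0 < C₀) :
    ∃ C : ℝ, 0 < C ∧
    ∀ (r ρ : ℝ), 1 ≤ r → 0 < ρ →
    ∀ (Ω : Set (EuclideanSpace ℝ (Fin 3))), IsOpen Ω →
    ∀ (u b H : EuclideanSpace ℝ (Fin 3) → ℝ),
      ContDiffOn ℝ 2 u Ω → ContinuousOn b Ω → ContinuousOn H Ω →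
    (∀ p ∈ Ω,
      u p * lap3 u p - ‖gradient u p‖ ^ 2
        + 2 * r * (u p) ^ 2 * (1 - u p - b p) = H p ∧
      0 ≤ u p ∧ u p ≤ 1 + C₀ / r ∧
      0 ≤ b p ∧ b p ≤ C₀ / r ∧
      |H p| ≤ C₀ * (1 + Real.sqrt r) ∧
      |fderiv ℝ u p eT| ≤ C₀ ∧
      ‖gradient (fun q => fderiv ℝ u q eT) p‖ ≤ C₀ * Real.sqrt r ∧
      ‖gradient u p‖ ≤ C₀ * Real.sqrt r ∧
      ‖fderiv ℝ (fderiv ℝ u) p‖ ≤ C₀ * r) →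
    ∀ (p₀ N : EuclideanSpace ℝ (Fin 3)), ‖N‖ = 1 → ‖N - eT‖ ≤ C₀ * ρ →
      planarDisk p₀ N ρ ⊆ Ω →
    ∀ q ∈ planarDisk p₀ N ρ, ‖q - p₀‖ < ρ →
      IsLocalMinOn u (planarDisk p₀ N ρ) q →
      (u q) ^ 2 * (1 - u q) ≤ C * ((Real.sqrt r)⁻¹ + ρ ^ 2) ∧
      (u q ≤ C * Real.sqrt ((Real.sqrt r)⁻¹ + ρ ^ 2) ∨
        1 - u q ≤ C * ((Real.sqrt r)⁻¹ + ρ ^ 2)) := by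
  set A : ℝ := 5 * (1 + C₀)^4 with hA
  have hApos : 0 < A := by positivity
  refine ⟨4 * A + 1, by positivity, ?_⟩
  intro r ρ hr hρ Ω hΩ u b H hu hb hH hpt p₀ N hN hNeT hsub q hq hqlt hmin
  set s := Real.sqrt r with hs
  have hs1 : 1 ≤ s := by
    rw [hs, show (1:ℝ) = Real.sqrt 1 by simp]
    exact Real.sqrt_le_sqrt hr
  have hs0 : 0 < s := by linarith
  have hsr : s * s = r := Real.mul_self_sqrt (by linarith)
  have hqΩ : q ∈ Ω := hsub hq
  obtain ⟨heq, hu0, hu1, hb0, hb1, hHb, hdut, hgdt, hgu, hhess⟩ := hpt q hqΩ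
  have hCA : ContDiffAt ℝ 2 u q := hu.contDiffAt (hΩ.mem_nhds hqΩ)
  have hfd : DifferentiableAt ℝ (fderiv ℝ u) q := by
    have h1 : ContDiffAt ℝ 1 (fderiv ℝ u) q := hCA.fderiv_right (by norm_num)
    exact h1.differentiableAt one_ne_zero
  have hsymm : IsSymmSndFDerivAt ℝ u q := hCA.isSymmSndFDerivAt (by norm_num)
  -- key second-order information at the constrained minimum
  have hkey : ∀ v : E3', inner ℝ v N = (0:ℝ) → ‖v‖ = 1 →
      fderiv ℝ u q v = 0 ∧ 0 ≤ fderiv ℝ (fderiv ℝ u) q v v := by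
    intro v hvN hv1
    have hminev : ∀ᶠ x in 𝓝 q, x ∈ planarDisk p₀ N ρ → u q ≤ u x := by
      have h : ∀ᶠ x in 𝓝[planarDisk p₀ N ρ] q, u q ≤ u x := hmin
      rwa [eventually_nhdsWithin_iff] at h
    rw [Metric.eventually_nhds_iff] at hminev
    obtain ⟨ε₁, hε₁, hmin1⟩ := hminev
    obtain ⟨ε₂, hε₂, hball⟩ := Metric.isOpen_iff.mp hΩ q hqΩ
    set ε := min ε₁ (min ε₂ (ρ - ‖q - p₀‖)) with hε
    have hεpos : 0 < ε := lt_min hε₁ (lt_min hε₂ (by linarith))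
    have hε1 : ε ≤ ε₁ := min_le_left _ _
    have hε2 : ε ≤ ε₂ := le_trans (min_le_right _ _) (min_le_left _ _)
    have hε3 : ε ≤ ρ - ‖q - p₀‖ := le_trans (min_le_right _ _) (min_le_right _ _)
    have hdist : ∀ t : ℝ, dist (q + t • v) q = |t| := by
      intro t
      rw [dist_eq_norm]
      simp [norm_smul, hv1]
    have hmem : ∀ t : ℝ, |t| < ε → q + t • v ∈ planarDisk p₀ N ρ := by
      intro t ht
      refine ⟨?_, ?_⟩
      · have h1 : ‖q + t • v - p₀‖ ≤ ‖q - p₀‖ + ‖t • v‖ := by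
          rw [add_sub_right_comm]
          exact norm_add_le _ _
        rw [norm_smul, hv1, Real.norm_eq_abs] at h1
        simp only [mul_one] at h1
        linarith
      · rw [add_sub_right_comm, inner_add_left, real_inner_smul_left, hq.2, hvN]
        ring
    have hΩmem : ∀ t : ℝ, |t| < ε → q + t • v ∈ Ω := by
      intro t ht
      apply hball
      rw [mem_ball, hdist]
      linarith
    have hudiff : ∀ t : ℝ, |t| < ε → DifferentiableAt ℝ u (q + t • v) := by
      intro t ht
      exact ((hu.contDiffAt (hΩ.mem_nhds (hΩmem t ht))).differentiableAt (by norm_num))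
    set g : ℝ → ℝ := fun t => u (q + t • v) with hg
    have hgmin : IsLocalMin g 0 := by
      have : ∀ᶠ t in 𝓝 (0:ℝ), g 0 ≤ g t := by
        rw [Metric.eventually_nhds_iff]
        refine ⟨ε, hεpos, fun t ht => ?_⟩
        rw [Real.dist_eq, sub_zero] at ht
        have := hmin1 (by rw [hdist]; linarith) (hmem t ht)
        simpa [hg] using this
      exact this
    have hevd : ∀ᶠ t in 𝓝 (0:ℝ), DifferentiableAt ℝ g t ∧
        deriv g t = fderiv ℝ u (q + t • v) v := by
      rw [Metric.eventually_nhds_iff]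
      refine ⟨ε, hεpos, fun t ht => ?_⟩
      rw [Real.dist_eq, sub_zero] at ht
      have hd := hasDerivAt_line u q v t (hudiff t ht)
      exact ⟨hd.differentiableAt, hd.deriv⟩
    constructor
    · have h0 : deriv g 0 = 0 := hgmin.deriv_eq_zero
      have hd := hasDerivAt_line u q v 0 (hudiff 0 (by simpa using hεpos))
      have : deriv g 0 = fderiv ℝ u (q + (0:ℝ) • v) v := hd.deriv
      rw [h0] at this
      simpa using this.symm
    · have hcongr : deriv g =ᶠ[𝓝 (0:ℝ)] fun t => fderiv ℝ u (q + t • v) v := by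
        filter_upwards [hevd] with t ht using ht.2
      have hd2 : HasDerivAt (deriv g) (fderiv ℝ (fderiv ℝ u) q v v) 0 :=
        (hasDerivAt_dline u q v hfd).congr_of_eventuallyEq hcongr
      exact second_deriv_test hgmin (by filter_upwards [hevd] with t ht using ht.1) hd2
  -- gradient is normal: tangential derivative vanishes
  have hgu' : ‖gradient u q‖ ≤ C₀ * s := hgu
  have hgrad : ‖gradient u q‖ ≤ C₀ + C₀^2 * ρ * s := by
    have hT' : ∀ v : E3', inner ℝ v N = (0:ℝ) → fderiv ℝ u q v = 0 := by
      intro v hvN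
      rcases eq_or_ne v 0 with rfl | hv0
      · simp
      · have hnv : ‖v‖ ≠ 0 := norm_ne_zero_iff.mpr hv0
        have h1 := (hkey (‖v‖⁻¹ • v)
          (by rw [real_inner_smul_left, hvN, mul_zero])
          (by rw [norm_smul]; simp [hnv, abs_of_nonneg (norm_nonneg v)])).1
        rw [ContinuousLinearMap.map_smul, smul_eq_mul, mul_eq_zero] at h1
        rcases h1 with h1 | h1
        · exact absurd (inv_eq_zero.mp h1) hnv
        · exact h1
    set G := gradient u q with hG
    set c : ℝ := inner ℝ G N with hc
    have hwN : inner ℝ (G - c • N) N = (0:ℝ) := by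
      rw [inner_sub_left, real_inner_smul_left, real_inner_self_eq_norm_mul_norm, hN]
      rw [← hc]; ring
    have hfw : fderiv ℝ u q (G - c • N) = 0 := hT' _ hwN
    have hGw : (inner ℝ G (G - c • N) : ℝ) = 0 := by rw [hG, inner_grad]; exact hfw
    have hww : (inner ℝ (G - c • N) (G - c • N) : ℝ) = 0 := by
      rw [inner_sub_left, hGw, real_inner_smul_left]
      have h9 : (inner ℝ N (G - c • N) : ℝ) = 0 := by rw [real_inner_comm]; exact hwN
      rw [h9]; ring
    have hGeq : G = c • N := by
      have := inner_self_eq_zero.mp hww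
      rwa [sub_eq_zero] at this
    have hGnorm : ‖G‖ = |c| := by rw [hGeq, norm_smul, hN, Real.norm_eq_abs, mul_one]
    have hsplit : c = fderiv ℝ u q eT + inner ℝ G (N - eT) := by
      have h1 : (inner ℝ G (eT + (N - eT)) : ℝ) = inner ℝ G eT + inner ℝ G (N - eT) :=
        inner_add_right _ _ _
      rw [show eT + (N - eT) = N by abel] at h1
      rw [hc, h1, hG, inner_grad]
    have h2 : |(inner ℝ G (N - eT) : ℝ)| ≤ (C₀ * s) * (C₀ * ρ) := by
      calc |(inner ℝ G (N - eT) : ℝ)| ≤ ‖G‖ * ‖N - eT‖ := abs_real_inner_le_norm _ _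
        _ ≤ (C₀ * s) * (C₀ * ρ) :=
          mul_le_mul hgu' hNeT (norm_nonneg _) (by positivity)
    have h3 : |c| ≤ C₀ + C₀^2 * ρ * s := by
      rw [hsplit]
      calc |fderiv ℝ u q eT + inner ℝ G (N - eT)|
          ≤ |fderiv ℝ u q eT| + |(inner ℝ G (N - eT) : ℝ)| := abs_add_le _ _
        _ ≤ C₀ + (C₀ * s) * (C₀ * ρ) := add_le_add hdut h2
        _ = C₀ + C₀^2 * ρ * s := by ring
    rw [hGnorm]
    exact h3
  -- Laplacian lower bound
  have hlap : -(C₀*s + 2*C₀^2*ρ*s + C₀^3*ρ^2*(s*s)) ≤ lap3 u q := by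
    set B := fderiv ℝ (fderiv ℝ u) q with hB
    have heT1 : ‖eT‖ = 1 := by
      rw [eT, EuclideanSpace.norm_single]
      norm_num
    have hBvT : ∀ v : E3', |B v eT| ≤ (C₀*s) * ‖v‖ := by
      intro v
      have hder : fderiv ℝ (fun p => fderiv ℝ u p eT) q = B.flip eT := by
        rw [fderiv_clm_apply hfd (differentiableAt_const eT)]
        simp
        rfl
      have h1 : (inner ℝ (gradient (fun p => fderiv ℝ u p eT) q) v : ℝ) = B v eT := by
        rw [inner_grad, hder]
        rfl
      calc |B v eT| = |(inner ℝ (gradient (fun p => fderiv ℝ u p eT) q) v : ℝ)| := by rw [h1]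
        _ ≤ ‖gradient (fun p => fderiv ℝ u p eT) q‖ * ‖v‖ := abs_real_inner_le_norm _ _
        _ ≤ (C₀*s) * ‖v‖ := mul_le_mul_of_nonneg_right hgdt (norm_nonneg v)
    have hsplit : B N N = B (N-eT) (N-eT) + B (N-eT) eT + B eT (N-eT) + B eT eT := by
      conv_lhs => rw [show N = (N - eT) + eT by abel]
      simp only [map_add, ContinuousLinearMap.add_apply]
      ring
    have hsym' : B eT (N-eT) = B (N-eT) eT := hsymm.eq eT (N-eT)
    have hb1' : |B (N-eT) (N-eT)| ≤ (C₀*(s*s)) * (C₀*ρ) * (C₀*ρ) := by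
      have h := B.le_opNorm₂ (N-eT) (N-eT)
      rw [Real.norm_eq_abs] at h
      have hh2 : ‖B‖ ≤ C₀*(s*s) := by rw [hsr]; exact hhess
      have t1 : ‖B‖*‖N-eT‖ ≤ (C₀*(s*s))*(C₀*ρ) :=
        mul_le_mul hh2 hNeT (norm_nonneg _) (by positivity)
      have t2 : (‖B‖*‖N-eT‖)*‖N-eT‖ ≤ ((C₀*(s*s))*(C₀*ρ))*(C₀*ρ) :=
        mul_le_mul t1 hNeT (norm_nonneg _) (by positivity)
      linarith
    have hb2' : |B (N-eT) eT| ≤ (C₀*s) * (C₀*ρ) := by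
      calc |B (N-eT) eT| ≤ (C₀*s) * ‖N-eT‖ := hBvT _
        _ ≤ (C₀*s) * (C₀*ρ) := by gcongr
    have hb3' : |B eT eT| ≤ C₀*s := by
      have := hBvT eT
      rwa [heT1, mul_one] at this
    have hBNN : -(C₀*s + 2*C₀^2*ρ*s + C₀^3*ρ^2*(s*s)) ≤ B N N := by
      have e1 := (abs_le.mp hb1').1
      have e2 := (abs_le.mp hb2').1
      have e3 := (abs_le.mp hb3').1
      rw [hsplit, hsym']
      nlinarith
    have hterm : ∀ i, fderiv ℝ (fun p => fderiv ℝ u p (e3 i)) q (e3 i) = B (e3 i) (e3 i) := by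
      intro i
      rw [fderiv_clm_apply hfd (differentiableAt_const (e3 i))]
      simp
      rfl
    obtain ⟨bb, hbb0⟩ := exists_onb N hN
    have htr : lap3 u q = ∑ j, B (bb j) (bb j) := by
      rw [lap3]
      simp only [hterm]
      simp only [e3]
      exact trace_indep B bb
    have hsum3 : ∑ j, B (bb j) (bb j) = B N N + B (bb 1) (bb 1) + B (bb 2) (bb 2) := by
      rw [Fin.sum_univ_three, hbb0]
    have htang : ∀ j : Fin 3, j ≠ 0 → 0 ≤ B (bb j) (bb j) := by
      intro j hj
      have h1 : inner ℝ (bb j) N = (0:ℝ) := by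
        rw [← hbb0]
        have := orthonormal_iff_ite.mp bb.orthonormal j 0
        rw [this, if_neg hj]
      exact (hkey (bb j) h1 (bb.orthonormal.1 j)).2
    have ht1 := htang 1 (by decide)
    have ht2 := htang 2 (by decide)
    rw [htr, hsum3]
    linarith
  -- assemble
  have hu1' : u q ≤ 1 + C₀ / (s*s) := by rw [hsr]; exact hu1
  have hb1' : b q ≤ C₀ / (s*s) := by rw [hsr]; exact hb1
  have heq' : u q * lap3 u q - ‖gradient u q‖ ^ 2
      + 2 * (s*s) * (u q) ^ 2 * (1 - u q - b q) = H q := by rw [hsr]; exact heq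
  have hmain := main_numeric C₀ s ρ (u q) (lap3 u q) ‖gradient u q‖ (H q) (b q)
    hC₀ hs1 hρ hu0 hu1' hb0 hb1' (norm_nonneg _) hgrad hHb hlap heq'
  have hfin := final_cases A s ρ (u q) hApos hs0 hρ hu0 (by rw [hA]; exact hmain)
  exact hfin
end
end
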